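/- Let Θ be the solenoid of type (w₁, w₂, …) and n ≥ 0. Then Θ is homeomorphic to the mapping torus of the translation ψₙ : Γₙ → Γₙ, ψₙ(x) = γ(w₁⋯wₙ)·x. -/

import Mathlib

open Topology

/-- The solenoid of type `(w 0, w 1, …)` (denoted `(w₁, w₂, …)` in the paper),
as a subgroup of the product of countably many circles:
`{(x₀, x₁, …) : xₙ₋₁ = xₙ ^ wₙ for all n ≥ 1}`. -/
noncomputable def solenoidSubgroup (w : ℕ → ℕ) : Subgroup (ℕ → Circle) where
  carrier := {x | ∀ n, x n = x (n + 1) ^ w n}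
  one_mem' := by intro n; simp
  mul_mem' := by intro a b ha hb n; simp only [Pi.mul_apply, ha n, hb n, mul_pow]
  inv_mem' := by intro a ha n; simp only [Pi.inv_apply, ha n, inv_pow]

/-- The solenoid as a topological space, with the subspace topology from the
product topology. -/
noncomputable abbrev Solenoid (w : ℕ → ℕ) : Type :=
  ↥(solenoidSubgroup w)

/-- `Γₙ`, the kernel of the projection of the solenoid onto its `n`-th
coordinate: `{x ∈ Θ | x₀ = x₁ = ⋯ = xₙ = 1}`, as a subgroup of the solenoid. -/
noncomputable def gammaSubgroup (w : ℕ → ℕ) (n : ℕ) : Subgroup (Solenoid w) where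
  carrier := {x | ∀ k ≤ n, (x : ℕ → Circle) k = 1}
  one_mem' := by intro k _; simp
  mul_mem' := by
    intro a b ha hb k hk
    simp only [Subgroup.coe_mul, Pi.mul_apply, ha k hk, hb k hk, one_mul]
  inv_mem' := by
    intro a ha k hk
    simp only [Subgroup.coe_inv, Pi.inv_apply, ha k hk, inv_one]

private lemma circle_exp_pow (b : ℝ) (m : ℕ) :
    Circle.exp b ^ m = Circle.exp (m * b) := by
  induction m with
  | zero => simp
  | succ k ih =>
    rw [pow_succ, ih, ← Circle.exp_add, Nat.cast_succ]
    ring_nf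

private lemma w_cast_ne_zero {w : ℕ → ℕ} (hw : ∀ n, 1 < w n) (j : ℕ) :
    (w j : ℝ) ≠ 0 := by
  exact_mod_cast (Nat.zero_lt_of_lt (hw j)).ne'

private lemma prod_w_ne_zero {w : ℕ → ℕ} (hw : ∀ n, 1 < w n) (k : ℕ) :
    (∏ j ∈ Finset.range k, (w j : ℝ)) ≠ 0 :=
  Finset.prod_ne_zero_iff.mpr fun j _ => w_cast_ne_zero hw j

private lemma solenoidGamma_mem (w : ℕ → ℕ) (hw : ∀ n, 1 < w n) (t : ℝ) :
    (fun k => Circle.exp (2 * Real.pi * t / ∏ j ∈ Finset.range k, (w j : ℝ)))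
      ∈ solenoidSubgroup w := by
  intro k
  show Circle.exp _ = Circle.exp _ ^ w k
  rw [circle_exp_pow]
  congr 1
  rw [Finset.prod_range_succ]
  have h1 := prod_w_ne_zero hw k
  have h2 := w_cast_ne_zero hw k
  field_simp

/-- The one-parameter subgroup `γ : ℝ → Θ`,
`γ(t) = (e^{2πit}, e^{2πit/w₁}, e^{2πit/(w₁w₂)}, …)`. -/
noncomputable def solenoidGamma (w : ℕ → ℕ) (hw : ∀ n, 1 < w n) (t : ℝ) :
    Solenoid w :=
  ⟨fun k => Circle.exp (2 * Real.pi * t / ∏ j ∈ Finset.range k, (w j : ℝ)),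
    solenoidGamma_mem w hw t⟩

private lemma solenoidGamma_mem_gamma (w : ℕ → ℕ) (hw : ∀ n, 1 < w n) (n : ℕ) :
    solenoidGamma w hw (∏ j ∈ Finset.range n, (w j : ℝ)) ∈ gammaSubgroup w n := by
  intro k hk
  show Circle.exp _ = 1
  have h1 := prod_w_ne_zero hw k
  have key : 2 * Real.pi * (∏ j ∈ Finset.range n, (w j : ℝ)) /
      (∏ j ∈ Finset.range k, (w j : ℝ)) =
      ((∏ j ∈ Finset.Ico k n, w j : ℕ) : ℤ) * (2 * Real.pi) := by
    rw [← Finset.prod_range_mul_prod_Ico (fun j => ((w j : ℝ))) hk]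
    push_cast
    field_simp
  rw [key]
  exact Circle.exp_int_mul_two_pi _

/-- The translation `ψₙ : Γₙ → Γₙ`, `ψₙ(x) = γ(w₁⋯wₙ) · x`. -/
noncomputable def solenoidPsi (w : ℕ → ℕ) (hw : ∀ n, 1 < w n) (n : ℕ) :
    ↥(gammaSubgroup w n) → ↥(gammaSubgroup w n) :=
  fun x =>
    (⟨solenoidGamma w hw (∏ j ∈ Finset.range n, (w j : ℝ)),
      solenoidGamma_mem_gamma w hw n⟩ : ↥(gammaSubgroup w n)) * x

/-- The defining identification of the mapping torus of `f : Y → Y`: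
`(y, 1)` is glued to `(f y, 0)` in `Y × [0,1]`. -/
def MappingTorusRel {Y : Type*} (f : Y → Y) (a b : Y × ↥unitInterval) : Prop :=
  a.2 = 1 ∧ b.2 = 0 ∧ b.1 = f a.1

/-- The mapping torus of `f : Y → Y`: the quotient of `Y × [0,1]` obtained by
identifying `(y, 1)` with `(f y, 0)`, with the quotient topology. -/
def MappingTorus {Y : Type*} [TopologicalSpace Y] (f : Y → Y) : Type _ :=
  Quot (MappingTorusRel f)

noncomputable instance {Y : Type*} [TopologicalSpace Y] (f : Y → Y) :
    TopologicalSpace (MappingTorus f) :=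
  inferInstanceAs (TopologicalSpace (Quot (MappingTorusRel f)))

private lemma solenoid_coord_pow {w : ℕ → ℕ} (x : Solenoid w) {k m : ℕ} (hk : k ≤ m) :
    (x : ℕ → Circle) k = (x : ℕ → Circle) m ^ ∏ j ∈ Finset.Ico k m, w j := by
  induction m, hk using Nat.le_induction with
  | base => simp
  | succ m hm ih =>
    rw [ih, x.2 m, Finset.prod_Ico_succ_top hm, ← pow_mul, mul_comm]

private lemma solenoidGamma_zero {w : ℕ → ℕ} (hw : ∀ n, 1 < w n) :
    solenoidGamma w hw 0 = 1 := by
  apply Subtype.ext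
  funext k
  show Circle.exp _ = 1
  simp

private lemma solenoidGamma_continuous {w : ℕ → ℕ} (hw : ∀ n, 1 < w n) :
    Continuous (solenoidGamma w hw) := by
  apply Continuous.subtype_mk
  exact continuous_pi fun k => Circle.exp.continuous.comp (by fun_prop)

private lemma solenoid_compactSpace (w : ℕ → ℕ) : CompactSpace (Solenoid w) := by
  have hcl : IsClosed (solenoidSubgroup w : Set (ℕ → Circle)) := by
    have : (solenoidSubgroup w : Set (ℕ → Circle)) =
        ⋂ k, {x : ℕ → Circle | x k = x (k + 1) ^ w k} := by
      ext x; simp [solenoidSubgroup, Set.mem_iInter]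
    rw [this]
    exact isClosed_iInter fun k =>
      isClosed_eq (continuous_apply k) ((continuous_apply (k + 1)).pow _)
  exact isCompact_iff_compactSpace.mp hcl.isCompact

private lemma gamma_compactSpace (w : ℕ → ℕ) (n : ℕ) :
    CompactSpace ↥(gammaSubgroup w n) := by
  haveI := solenoid_compactSpace w
  have hcl : IsClosed ((gammaSubgroup w n : Subgroup (Solenoid w)) : Set (Solenoid w)) := by
    have : ((gammaSubgroup w n : Subgroup (Solenoid w)) : Set (Solenoid w)) =
        ⋂ k, ⋂ (_ : k ≤ n), {x : Solenoid w | (x : ℕ → Circle) k = 1} := by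
      ext x; simp [gammaSubgroup, Set.mem_iInter]
    rw [this]
    exact isClosed_iInter fun k => isClosed_iInter fun _ =>
      isClosed_eq ((continuous_apply k).comp continuous_subtype_val) continuous_const
  exact isCompact_iff_compactSpace.mp hcl.isCompact

/-- **The solenoid is homeomorphic to the mapping torus of the translation
`ψₙ : Γₙ → Γₙ`, `ψₙ(x) = γ(w₁⋯wₙ)·x`.** -/
theorem solenoid_homeomorphic_mapping_torus
    (w : ℕ → ℕ) (hw : ∀ n, 1 < w n) (n : ℕ) :
    Nonempty (Solenoid w ≃ₜ MappingTorus (solenoidPsi w hw n)) := by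
  classical
  haveI := solenoid_compactSpace w
  haveI := gamma_compactSpace w n
  set P : ℝ := ∏ j ∈ Finset.range n, (w j : ℝ) with hPdef
  have hPne : P ≠ 0 := prod_w_ne_zero hw n
  have hπ : (2 : ℝ) * Real.pi ≠ 0 := by positivity
  -- the map from the cylinder to the solenoid
  set F : ↥(gammaSubgroup w n) × ↥unitInterval → Solenoid w :=
    fun p => solenoidGamma w hw ((p.2 : ℝ) * P) * (p.1 : Solenoid w) with hFdef
  have hFcont : Continuous F := by
    apply Continuous.mul
    · exact (solenoidGamma_continuous hw).comp
        ((continuous_subtype_val.comp continuous_snd).mul continuous_const)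
    · exact continuous_subtype_val.comp continuous_fst
  -- the n-th coordinate of F p
  have coordn : ∀ p : ↥(gammaSubgroup w n) × ↥unitInterval,
      ((F p : Solenoid w) : ℕ → Circle) n = Circle.exp (2 * Real.pi * (p.2 : ℝ)) := by
    intro p
    have hx : ((p.1 : Solenoid w) : ℕ → Circle) n = 1 := p.1.2 n le_rfl
    show Circle.exp (2 * Real.pi * ((p.2 : ℝ) * P) / P) *
        ((p.1 : Solenoid w) : ℕ → Circle) n = _
    rw [hx, mul_one]
    congr 1
    field_simp
  -- coercion of psi
  have psi_coe : ∀ x : ↥(gammaSubgroup w n),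
      ((solenoidPsi w hw n x : ↥(gammaSubgroup w n)) : Solenoid w) =
        solenoidGamma w hw P * (x : Solenoid w) := fun x => rfl
  -- F respects the gluing relation
  have hrel : ∀ a b, MappingTorusRel (solenoidPsi w hw n) a b → F a = F b := by
    rintro ⟨x, t⟩ ⟨y, s⟩ ⟨h1, h2, h3⟩
    simp only at h1 h2 h3
    subst h1; subst h2; subst h3
    show solenoidGamma w hw (((1 : ↥unitInterval) : ℝ) * P) * (x : Solenoid w) =
      solenoidGamma w hw (((0 : ↥unitInterval) : ℝ) * P) * _
    rw [psi_coe, Set.Icc.coe_one, Set.Icc.coe_zero, one_mul, zero_mul,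
      solenoidGamma_zero hw, one_mul]
  set g : MappingTorus (solenoidPsi w hw n) → Solenoid w := Quot.lift F hrel with hgdef
  have hgcont : Continuous g := continuous_quot_lift hrel hFcont
  -- injectivity modulo the relation
  have hmk : ∀ p q, F p = F q →
      Quot.mk (MappingTorusRel (solenoidPsi w hw n)) p = Quot.mk _ q := by
    rintro ⟨x, t, ht0, ht1⟩ ⟨y, s, hs0, hs1⟩ hFeq
    have h1 : Circle.exp (2 * Real.pi * t) = Circle.exp (2 * Real.pi * s) := by
      have := congrArg (fun z : Solenoid w => (z : ℕ → Circle) n) hFeq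
      simpa [coordn (⟨x, t, ht0, ht1⟩ : _ × _), coordn (⟨y, s, hs0, hs1⟩ : _ × _)]
        using this
    obtain ⟨m, hm⟩ := Circle.exp_eq_exp.mp h1
    have hts : t = s + m := by
      have h2 : 2 * Real.pi * t = 2 * Real.pi * (s + m) := by rw [hm]; ring
      exact mul_left_cancel₀ hπ h2
    have hmr : (m : ℝ) = t - s := by rw [hts]; ring
    have hm1 : (-1 : ℤ) ≤ m := by
      have : (-1 : ℝ) ≤ (m : ℝ) := by rw [hmr]; linarith
      exact_mod_cast this
    have hm2 : m ≤ 1 := by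
      have : (m : ℝ) ≤ 1 := by rw [hmr]; linarith
      exact_mod_cast this
    interval_cases m
    · -- m = -1 : t = 0, s = 1, rel q p
      have hts' : t = s - 1 := by rw [hts]; push_cast; ring
      have ht : t = 0 := le_antisymm (by linarith) ht0
      have hs : s = 1 := le_antisymm hs1 (by linarith)
      refine (Quot.sound ?_).symm
      refine ⟨Subtype.ext (by simpa using hs), Subtype.ext (by simpa using ht), ?_⟩
      apply Subtype.ext
      rw [psi_coe]
      have : solenoidGamma w hw (t * P) * (x : Solenoid w) =
          solenoidGamma w hw (s * P) * (y : Solenoid w) := hFeq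
      rw [ht, hs, zero_mul, one_mul, solenoidGamma_zero hw, one_mul] at this
      exact this
    · -- m = 0 : t = s, x = y
      have hts' : t = s := by rw [hts]; push_cast; ring
      subst hts'
      have : solenoidGamma w hw (t * P) * (x : Solenoid w) =
          solenoidGamma w hw (t * P) * (y : Solenoid w) := hFeq
      have hxy : (x : Solenoid w) = (y : Solenoid w) := mul_left_cancel this
      congr 1
      exact Prod.ext (Subtype.ext hxy) rfl
    · -- m = 1 : t = 1, s = 0, rel p q
      have hts' : t = s + 1 := by rw [hts]; push_cast; ring
      have hs : s = 0 := le_antisymm (by linarith) hs0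
      have ht : t = 1 := by rw [hts', hs, zero_add]
      apply Quot.sound
      refine ⟨Subtype.ext (by simpa using ht), Subtype.ext (by simpa using hs), ?_⟩
      apply Subtype.ext
      rw [psi_coe]
      have : solenoidGamma w hw (t * P) * (x : Solenoid w) =
          solenoidGamma w hw (s * P) * (y : Solenoid w) := hFeq
      rw [ht, hs, zero_mul, one_mul, solenoidGamma_zero hw, one_mul] at this
      exact this.symm
  have hginj : Function.Injective g := by
    intro a b
    induction a using Quot.ind with | _ p =>
    induction b using Quot.ind with | _ q =>
    exact hmk p q
  -- surjectivity
  have hgsurj : Function.Surjective g := by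
    intro y
    set s0 : ℝ := Complex.arg ((y : ℕ → Circle) n : ℂ) / (2 * Real.pi) with hs0def
    set t : ℝ := Int.fract s0 with htdef
    have ht0 : 0 ≤ t := Int.fract_nonneg _
    have ht1 : t ≤ 1 := (Int.fract_lt_one _).le
    have hexp : Circle.exp (2 * Real.pi * t) = (y : ℕ → Circle) n := by
      have h1 : Circle.exp (2 * Real.pi * t) = Circle.exp (2 * Real.pi * s0) :=
        Circle.exp_eq_exp.mpr ⟨-⌊s0⌋, by rw [htdef, (Int.self_sub_floor s0).symm]; push_cast; ring⟩
      rw [h1]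
      have h2 : 2 * Real.pi * s0 = Complex.arg ((y : ℕ → Circle) n : ℂ) := by
        rw [hs0def]; field_simp
      rw [h2]
      exact Circle.exp_arg _
    set x : Solenoid w := (solenoidGamma w hw (t * P))⁻¹ * y with hxdef
    have hxn : (x : ℕ → Circle) n = 1 := by
      show (Circle.exp (2 * Real.pi * (t * P) / P))⁻¹ * (y : ℕ → Circle) n = 1
      have : 2 * Real.pi * (t * P) / P = 2 * Real.pi * t := by field_simp
      rw [this, hexp, inv_mul_cancel]
    have hxmem : x ∈ gammaSubgroup w n := by
      intro k hk
      rw [solenoid_coord_pow x hk, hxn, one_pow]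
    refine ⟨Quot.mk _ (⟨x, hxmem⟩, ⟨t, ht0, ht1⟩), ?_⟩
    show solenoidGamma w hw (t * P) * ((solenoidGamma w hw (t * P))⁻¹ * y) = y
    rw [← mul_assoc, mul_inv_cancel, one_mul]
  haveI : CompactSpace (MappingTorus (solenoidPsi w hw n)) :=
    inferInstanceAs (CompactSpace (Quot (MappingTorusRel (solenoidPsi w hw n))))
  let e : MappingTorus (solenoidPsi w hw n) ≃ Solenoid w :=
    Equiv.ofBijective g ⟨hginj, hgsurj⟩
  have hecont : Continuous e := hgcont
  exact ⟨(hecont.homeoOfEquivCompactToT2).symm⟩
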